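/- Let γ: [0,1] → ℂⁿ be an absolutely continuous curve with γ(0) = z, γ(1) = w, and |γ(t)| > 1 for all t. Then ∫₀¹ (|γ'(t)| + |Re ⟨γ'(t), γ(t)⟩| / √(|γ(t)|² − 1)) dt ≥ |z − w| + √(|z|² − 1) − √(|w|² − 1). -/

import Mathlib

open scoped InnerProductSpace
open MeasureTheory intervalIntegral

private lemma stmt7_aux {m η ε D s : ℝ} (hm : 0 < m) (hε : 0 < ε)
    (hη0 : 0 ≤ η) (hη1 : η ≤ m) (hη2 : η ≤ ε * m / 2) (hη3 : η ≤ ε * m ^ 2 / 3)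
    (hs0 : 0 < s) (hs1 : s < m + η) (hD : 2 * m - η ≤ D) :
    2 / D ≤ 1 / s + ε ∧ 2 * η / D ≤ ε := by
  have h2mη : (0:ℝ) < 2 * m - η := by linarith
  have hD0 : 0 < D := lt_of_lt_of_le h2mη hD
  have hmη : (0:ℝ) < m + η := by linarith
  constructor
  · have h1 : 2 / D ≤ 2 / (2 * m - η) :=
      div_le_div_of_nonneg_left (by norm_num) h2mη hD
    have h2 : 1 / (m + η) ≤ 1 / s := one_div_le_one_div_of_le hs0 hs1.le
    have hmm : m * m ≤ (m + η) * (2 * m - η) :=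
      mul_le_mul (by linarith) (by linarith) hm.le (by linarith)
    have key : 2 * (m + η) ≤ (1 + ε * (m + η)) * (2 * m - η) := by nlinarith
    have h3 : 2 / (2 * m - η) ≤ (1 + ε * (m + η)) / (m + η) :=
      (div_le_div_iff₀ h2mη hmη).mpr key
    have h4 : (1 + ε * (m + η)) / (m + η) = 1 / (m + η) + ε := by field_simp
    linarith
  · have h1 : 2 * η / D ≤ 2 * η / m := by
      apply div_le_div_of_nonneg_left (by linarith) hm (by linarith)
    have : 2 * η / m ≤ ε := by rw [div_le_iff₀ hm]; linarith
    linarith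

set_option maxHeartbeats 1600000 in
/-- lower bound for the integrated metric on the spherical shell.
An absolutely continuous curve is encoded by an integrable derivative `γ'`
together with the fundamental theorem of calculus identity. -/
theorem stmt_7 {n : ℕ} (γ γ' : ℝ → EuclideanSpace ℂ (Fin n))
    (hγ' : IntervalIntegrable γ' volume 0 1)
    (hFTC : ∀ t ∈ Set.Icc (0 : ℝ) 1, γ t = γ 0 + ∫ s in (0 : ℝ)..t, γ' s)
    (hout : ∀ t ∈ Set.Icc (0 : ℝ) 1, 1 < ‖γ t‖)
    (hint : IntervalIntegrable
      (fun t => ‖γ' t‖ + |(⟪γ t, γ' t⟫_ℂ).re| / Real.sqrt (‖γ t‖ ^ 2 - 1)) volume 0 1) :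
    ‖γ 0 - γ 1‖ + Real.sqrt (‖γ 0‖ ^ 2 - 1) - Real.sqrt (‖γ 1‖ ^ 2 - 1) ≤
      ∫ t in (0 : ℝ)..1,
        (‖γ' t‖ + |(⟪γ t, γ' t⟫_ℂ).re| / Real.sqrt (‖γ t‖ ^ 2 - 1)) := by
  have h01 : (0:ℝ) ≤ 1 := zero_le_one
  have hIcc : Set.uIcc (0:ℝ) 1 = Set.Icc 0 1 := Set.uIcc_of_le h01
  have h0mem : (0:ℝ) ∈ Set.Icc (0:ℝ) 1 := by norm_num
  have h1mem : (1:ℝ) ∈ Set.Icc (0:ℝ) 1 := by norm_num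
  set q : ℝ → ℝ := fun t => |(⟪γ t, γ' t⟫_ℂ).re| with hqdef
  set ψ : ℝ → ℝ := fun t => Real.sqrt (‖γ t‖ ^ 2 - 1) with hψdef
  set Bf : ℝ → ℝ := fun t => q t / ψ t with hBdef
  set w : ℝ → ℝ := fun t => q t + ‖γ' t‖ + 1 with hwdef
  -- positivity of ψ on Icc
  have hφpos : ∀ t ∈ Set.Icc (0:ℝ) 1, 0 < ‖γ t‖ ^ 2 - 1 := by
    intro t ht; have := hout t ht; nlinarith
  have hψpos : ∀ t ∈ Set.Icc (0:ℝ) 1, 0 < ψ t := fun t ht =>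
    Real.sqrt_pos.mpr (hφpos t ht)
  -- continuity of γ on Icc
  have hγ'Icc : IntegrableOn γ' (Set.uIcc (0:ℝ) 1) volume := by
    rw [hIcc, integrableOn_Icc_iff_integrableOn_Ioc]
    exact hγ'.1
  have hγc : ContinuousOn γ (Set.Icc (0:ℝ) 1) := by
    have h1 : ContinuousOn (fun t => γ 0 + ∫ s in (0:ℝ)..t, γ' s) (Set.Icc 0 1) := by
      have := intervalIntegral.continuousOn_primitive_interval (a := (0:ℝ)) (b := 1) hγ'Icc
      rw [hIcc] at this
      exact continuousOn_const.add this
    exact h1.congr hFTC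
  have hψc : ContinuousOn ψ (Set.Icc (0:ℝ) 1) :=
    Real.continuous_sqrt.comp_continuousOn ((hγc.norm.pow 2).sub continuousOn_const)
  -- bound on ‖γ‖
  obtain ⟨M, hM⟩ := isCompact_Icc.exists_bound_of_continuousOn hγc
  -- integrability of q
  have hqI : IntervalIntegrable q volume 0 1 := by
    rw [intervalIntegrable_iff_integrableOn_Ioc_of_le h01]
    have hγm : AEStronglyMeasurable γ (volume.restrict (Set.Ioc (0:ℝ) 1)) :=
      (hγc.mono Set.Ioc_subset_Icc_self).aestronglyMeasurable measurableSet_Ioc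
    have hγ'm : AEStronglyMeasurable γ' (volume.restrict (Set.Ioc (0:ℝ) 1)) := hγ'.1.1
    have hinm : AEStronglyMeasurable (fun t => (⟪γ t, γ' t⟫_ℂ)) (volume.restrict (Set.Ioc (0:ℝ) 1)) :=
      hγm.inner hγ'm
    have hqm : AEStronglyMeasurable q (volume.restrict (Set.Ioc (0:ℝ) 1)) := by
      have := (Complex.continuous_re.comp_aestronglyMeasurable hinm).norm
      simpa [hqdef, Real.norm_eq_abs] using this
    refine Integrable.mono' ((hγ'.1.norm).const_mul M) hqm ?_
    rw [ae_restrict_iff' measurableSet_Ioc]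
    refine ae_of_all _ fun t ht => ?_
    have ht' : t ∈ Set.Icc (0:ℝ) 1 := Set.Ioc_subset_Icc_self ht
    have h1 : |(⟪γ t, γ' t⟫_ℂ).re| ≤ ‖(⟪γ t, γ' t⟫_ℂ)‖ := Complex.abs_re_le_norm _
    have h2 : ‖(⟪γ t, γ' t⟫_ℂ)‖ ≤ ‖γ t‖ * ‖γ' t‖ := norm_inner_le_norm _ _
    have h3 : ‖γ t‖ * ‖γ' t‖ ≤ M * ‖γ' t‖ :=
      mul_le_mul_of_nonneg_right (hM t ht') (norm_nonneg _)
    simp only [hqdef, Real.norm_eq_abs, abs_abs]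
    linarith
  -- integrability of Bf
  have hBI : IntervalIntegrable Bf volume 0 1 := by
    have := hint.sub hγ'.norm
    simpa [hBdef, hqdef, hψdef] using this
  have hwI : IntervalIntegrable w volume 0 1 :=
    (hqI.add hγ'.norm).add intervalIntegrable_const
  -- Part 1
  have part1 : ‖γ 0 - γ 1‖ ≤ ∫ t in (0:ℝ)..1, ‖γ' t‖ := by
    have e : γ 1 = γ 0 + ∫ s in (0:ℝ)..1, γ' s := hFTC 1 h1mem
    have e2 : γ 0 - γ 1 = -(∫ s in (0:ℝ)..1, γ' s) := by rw [e]; abel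
    rw [e2, norm_neg]
    exact intervalIntegral.norm_integral_le_integral_norm h01
  -- Part 2
  have part2 : ψ 0 - ψ 1 ≤ ∫ t in (0:ℝ)..1, Bf t := by
    have key : ∀ ε > (0:ℝ), ψ 0 - ψ 1 ≤ (∫ t in (0:ℝ)..1, Bf t) + ε * ∫ t in (0:ℝ)..1, w t := by
      intro ε hε
      set S : Set ℝ := {t ∈ Set.Icc (0:ℝ) 1 |
        ψ 0 - ψ t ≤ (∫ s in (0:ℝ)..t, Bf s) + ε * ∫ s in (0:ℝ)..t, w s} with hSdef
      have hPB : ContinuousOn (fun t => ∫ s in (0:ℝ)..t, Bf s) (Set.Icc (0:ℝ) 1) := by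
        have := intervalIntegral.continuousOn_primitive_interval' (b₁ := (0:ℝ)) (b₂ := 1) hBI
          (by rw [hIcc]; exact h0mem)
        rwa [hIcc] at this
      have hPw : ContinuousOn (fun t => ∫ s in (0:ℝ)..t, w s) (Set.Icc (0:ℝ) 1) := by
        have := intervalIntegral.continuousOn_primitive_interval' (b₁ := (0:ℝ)) (b₂ := 1) hwI
          (by rw [hIcc]; exact h0mem)
        rwa [hIcc] at this
      have hSclosed : IsClosed S :=
        isClosed_Icc.isClosed_le (continuousOn_const.sub hψc)
          (hPB.add (continuousOn_const.mul hPw))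
      have h0S : (0:ℝ) ∈ S := by
        refine ⟨h0mem, ?_⟩
        simp
      have hbdd : BddAbove S := BddAbove.mono (Set.sep_subset _ _) bddAbove_Icc
      set T : ℝ := sSup S with hTdef
      have hTS : T ∈ S := hSclosed.csSup_mem ⟨0, h0S⟩ hbdd
      have hT01 : T ∈ Set.Icc (0:ℝ) 1 := hTS.1
      have hone : (1:ℝ) ∈ S := by
        by_contra hns
        have hT1 : T < 1 := lt_of_le_of_ne hT01.2 (fun h => hns (h ▸ hTS))
        -- setup constants
        set m : ℝ := ψ T with hmdef
        have hm : 0 < m := hψpos T hT01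
        set η : ℝ := min m (min (ε * m / 2) (ε * m ^ 2 / 3)) with hηdef
        have hη0 : 0 < η := by
          apply lt_min (by linarith)
          apply lt_min <;> positivity
        have hη1 : η ≤ m := min_le_left _ _
        have hη2 : η ≤ ε * m / 2 := le_trans (min_le_right _ _) (min_le_left _ _)
        have hη3 : η ≤ ε * m ^ 2 / 3 := le_trans (min_le_right _ _) (min_le_right _ _)
        -- continuity choices
        obtain ⟨δ₁, hδ₁0, hδ₁⟩ := Metric.continuousWithinAt_iff.mp (hγc T hT01) η hη0
        obtain ⟨δ₂, hδ₂0, hδ₂⟩ := Metric.continuousWithinAt_iff.mp (hψc T hT01) η hη0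
        set δ : ℝ := min δ₁ δ₂ with hδdef
        have hδ0 : 0 < δ := lt_min hδ₁0 hδ₂0
        set t : ℝ := min (T + δ / 2) 1 with htdef
        have hTt : T < t := by
          apply lt_min (by linarith) hT1
        have ht01 : t ∈ Set.Icc (0:ℝ) 1 := ⟨le_trans hT01.1 hTt.le, min_le_right _ _⟩
        have hwindow : ∀ u ∈ Set.Icc T t, u ∈ Set.Icc (0:ℝ) 1 ∧
            ‖γ u - γ T‖ < η ∧ |ψ u - ψ T| < η := by
          intro u hu
          have hu01 : u ∈ Set.Icc (0:ℝ) 1 := ⟨le_trans hT01.1 hu.1, le_trans hu.2 ht01.2⟩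
          have hdist : dist u T < δ := by
            rw [Real.dist_eq, abs_of_nonneg (by linarith [hu.1])]
            have : t ≤ T + δ / 2 := min_le_left _ _
            linarith [hu.2]
          refine ⟨hu01, ?_, ?_⟩
          · have := hδ₁ hu01 (lt_of_lt_of_le hdist (min_le_left _ _))
            rwa [dist_eq_norm] at this
          · have := hδ₂ hu01 (lt_of_lt_of_le hdist (min_le_right _ _))
            rwa [Real.dist_eq] at this
        -- subinterval integrabilities
        have hsub : Set.uIcc T t ⊆ Set.uIcc (0:ℝ) 1 :=
          Set.uIcc_subset_uIcc (by rw [hIcc]; exact hT01) (by rw [hIcc]; exact ht01)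
        have hsub0T : Set.uIcc (0:ℝ) T ⊆ Set.uIcc (0:ℝ) 1 :=
          Set.uIcc_subset_uIcc (by rw [hIcc]; exact h0mem) (by rw [hIcc]; exact hT01)
        have hsub0t : Set.uIcc (0:ℝ) t ⊆ Set.uIcc (0:ℝ) 1 :=
          Set.uIcc_subset_uIcc (by rw [hIcc]; exact h0mem) (by rw [hIcc]; exact ht01)
        have hγ'Tt : IntervalIntegrable γ' volume T t := hγ'.mono_set hsub
        have hBTt : IntervalIntegrable Bf volume T t := hBI.mono_set hsub
        have hwTt : IntervalIntegrable w volume T t := hwI.mono_set hsub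
        have hqTt : IntervalIntegrable q volume T t := hqI.mono_set hsub
        have hγ'nTt : IntervalIntegrable (fun u => ‖γ' u‖) volume T t := hγ'Tt.norm
        -- the difference
        have hd : γ t - γ T = ∫ s in T..t, γ' s := by
          rw [hFTC t ht01, hFTC T hT01]
          have := intervalIntegral.integral_interval_sub_left (μ := volume) (f := γ')
            (hγ'.mono_set hsub0t) (hγ'.mono_set hsub0T)
          rw [← this]; abel
        -- linear functional
        have hLI : IntervalIntegrable (fun u => (⟪γ T, γ' u⟫_ℂ).re) volume T t := by
          have := (Complex.reCLM.comp ((innerSL ℂ (γ T)).restrictScalars ℝ))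
          refine ⟨(Complex.reCLM.comp ((innerSL ℂ (γ T)).restrictScalars ℝ)).integrable_comp hγ'Tt.1,
            (Complex.reCLM.comp ((innerSL ℂ (γ T)).restrictScalars ℝ)).integrable_comp hγ'Tt.2⟩
        have hLd : (⟪γ T, γ t - γ T⟫_ℂ).re = ∫ u in T..t, (⟪γ T, γ' u⟫_ℂ).re := by
          have := (Complex.reCLM.comp ((innerSL ℂ (γ T)).restrictScalars ℝ)).intervalIntegral_comp_comm hγ'Tt
          rw [hd]
          exact this.symm
        -- numerator bound
        have habs : |(⟪γ T, γ t - γ T⟫_ℂ).re| ≤ ∫ u in T..t, (q u + η * ‖γ' u‖) := by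
          rw [hLd]
          calc |∫ u in T..t, (⟪γ T, γ' u⟫_ℂ).re|
              ≤ ∫ u in T..t, |(⟪γ T, γ' u⟫_ℂ).re| := by
                have := intervalIntegral.norm_integral_le_integral_norm
                  (f := fun u => (⟪γ T, γ' u⟫_ℂ).re) (μ := volume) hTt.le
                simpa [Real.norm_eq_abs] using this
            _ ≤ ∫ u in T..t, (q u + η * ‖γ' u‖) := by
                apply intervalIntegral.integral_mono_on hTt.le hLI.norm
                  (hqTt.add (hγ'nTt.const_mul η))
                intro u hu
                obtain ⟨hu01, hγu, hψu⟩ := hwindow u hu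
                have e1 : (⟪γ T, γ' u⟫_ℂ) = (⟪γ u, γ' u⟫_ℂ) + (⟪γ T - γ u, γ' u⟫_ℂ) := by
                  rw [← inner_add_left]
                  congr 1
                  abel
                have : |(⟪γ T, γ' u⟫_ℂ).re| ≤ |(⟪γ u, γ' u⟫_ℂ).re| + |(⟪γ T - γ u, γ' u⟫_ℂ).re| := by
                  rw [e1, Complex.add_re]; exact abs_add_le _ _
                have h2 : |(⟪γ T - γ u, γ' u⟫_ℂ).re| ≤ ‖γ T - γ u‖ * ‖γ' u‖ :=
                  le_trans (Complex.abs_re_le_norm _) (norm_inner_le_norm (𝕜 := ℂ) _ _)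
                have h3 : ‖γ T - γ u‖ * ‖γ' u‖ ≤ η * ‖γ' u‖ := by
                  apply mul_le_mul_of_nonneg_right _ (norm_nonneg _)
                  rw [← norm_neg, neg_sub]
                  exact hγu.le
                simp only [Real.norm_eq_abs, hqdef]
                linarith
        -- φ difference
        have hφdiff : (‖γ T‖ ^ 2 - 1) - (‖γ t‖ ^ 2 - 1) ≤ 2 * ∫ u in T..t, (q u + η * ‖γ' u‖) := by
          have e : γ T + (γ t - γ T) = γ t := by abel
          have hns : ‖γ t‖ ^ 2 = ‖γ T‖ ^ 2 + 2 * (⟪γ T, γ t - γ T⟫_ℂ).re + ‖γ t - γ T‖ ^ 2 := by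
            have h := norm_add_sq (𝕜 := ℂ) (γ T) (γ t - γ T)
            rw [e] at h
            exact h
          have h5 : -((⟪γ T, γ t - γ T⟫_ℂ).re) ≤ |(⟪γ T, γ t - γ T⟫_ℂ).re| := neg_le_abs _
          have h6 : (0:ℝ) ≤ ‖γ t - γ T‖ ^ 2 := sq_nonneg _
          linarith
        -- sqrt difference
        have hψt0 : 0 < ψ t := hψpos t ht01
        have hDpos : 0 < ψ T + ψ t := by linarith
        have hsq : ψ T - ψ t = ((‖γ T‖ ^ 2 - 1) - (‖γ t‖ ^ 2 - 1)) / (ψ T + ψ t) := by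
          rw [eq_div_iff (ne_of_gt hDpos)]
          have h1 : ψ T ^ 2 = ‖γ T‖ ^ 2 - 1 := Real.sq_sqrt (hφpos T hT01).le
          have h2 : ψ t ^ 2 = ‖γ t‖ ^ 2 - 1 := Real.sq_sqrt (hφpos t ht01).le
          linear_combination h1 - h2
        -- window bounds for aux lemma
        have hψTt : ψ t > m - η := by
          have := (hwindow t ⟨hTt.le, le_refl t⟩).2.2
          rw [abs_lt] at this; linarith [this.1]
        have hDlow : 2 * m - η ≤ ψ T + ψ t := by
          simp only [← hmdef]; linarith
        -- main step estimate
        have hInt : IntervalIntegrable (fun u => q u + η * ‖γ' u‖) volume T t :=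
          hqTt.add (hγ'nTt.const_mul η)
        have hstep : ψ T - ψ t ≤ (∫ s in T..t, Bf s) + ε * ∫ s in T..t, w s := by
          rw [hsq]
          have hnum : ((‖γ T‖ ^ 2 - 1) - (‖γ t‖ ^ 2 - 1)) / (ψ T + ψ t)
              ≤ (2 * ∫ u in T..t, (q u + η * ‖γ' u‖)) / (ψ T + ψ t) := by
            gcongr
          have e3 : (2 * ∫ u in T..t, (q u + η * ‖γ' u‖)) / (ψ T + ψ t)
              = ∫ u in T..t, 2 * (q u + η * ‖γ' u‖) / (ψ T + ψ t) := by
            rw [intervalIntegral.integral_div, intervalIntegral.integral_const_mul]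
          have hmono : (∫ u in T..t, 2 * (q u + η * ‖γ' u‖) / (ψ T + ψ t))
              ≤ ∫ s in T..t, (Bf s + ε * w s) := by
            apply intervalIntegral.integral_mono_on hTt.le
              ((hInt.const_mul 2).div_const (ψ T + ψ t))
              (hBTt.add (hwTt.const_mul ε))
            intro u hu
            obtain ⟨hu01, hγu, hψu⟩ := hwindow u hu
            have hψu0 : 0 < ψ u := hψpos u hu01
            have hψuub : ψ u < m + η := by
              rw [abs_lt] at hψu
              simp only [← hmdef] at hψu
              linarith [hψu.2]
            obtain ⟨ha, hb⟩ := stmt7_aux hm hε hη0.le hη1 hη2 hη3 hψu0 hψuub hDlow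
            have hq0 : 0 ≤ q u := abs_nonneg _
            have hn0 : 0 ≤ ‖γ' u‖ := norm_nonneg _
            have e4 : 2 * (q u + η * ‖γ' u‖) / (ψ T + ψ t)
                = q u * (2 / (ψ T + ψ t)) + ‖γ' u‖ * (2 * η / (ψ T + ψ t)) := by
              field_simp
            rw [e4]
            have t1 : q u * (2 / (ψ T + ψ t)) ≤ q u * (1 / ψ u + ε) :=
              mul_le_mul_of_nonneg_left ha hq0
            have t2 : ‖γ' u‖ * (2 * η / (ψ T + ψ t)) ≤ ‖γ' u‖ * ε :=
              mul_le_mul_of_nonneg_left hb hn0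
            have e5 : q u * (1 / ψ u + ε) = q u / ψ u + q u * ε := by
              rw [mul_add, mul_one_div]
            have hBfu : Bf u = q u / ψ u := rfl
            have hwu : w u = q u + ‖γ' u‖ + 1 := rfl
            rw [hBfu, hwu]
            nlinarith [hε.le]
          have e6 : (∫ s in T..t, (Bf s + ε * w s))
              = (∫ s in T..t, Bf s) + ε * ∫ s in T..t, w s := by
            rw [intervalIntegral.integral_add hBTt (hwTt.const_mul ε),
              intervalIntegral.integral_const_mul]
          linarith
        have htS : t ∈ S := by
          refine ⟨ht01, ?_⟩
          have hadd1 : (∫ s in (0:ℝ)..T, Bf s) + (∫ s in T..t, Bf s) = ∫ s in (0:ℝ)..t, Bf s :=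
            intervalIntegral.integral_add_adjacent_intervals (hBI.mono_set hsub0T) hBTt
          have hadd2 : (∫ s in (0:ℝ)..T, w s) + (∫ s in T..t, w s) = ∫ s in (0:ℝ)..t, w s :=
            intervalIntegral.integral_add_adjacent_intervals (hwI.mono_set hsub0T) hwTt
          have hTmem := hTS.2
          rw [← hadd1, ← hadd2]
          have : ψ 0 - ψ t = (ψ 0 - ψ T) + (ψ T - ψ t) := by ring
          rw [this]
          rw [mul_add]
          linarith
        exact absurd (le_csSup hbdd htS) (not_le.mpr hTt)
      have := hone.2
      simpa using this
    -- pass to limit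
    have hW0 : 0 ≤ ∫ t in (0:ℝ)..1, w t := by
      apply intervalIntegral.integral_nonneg h01
      intro u hu
      simp only [hwdef]
      positivity
    refine le_of_forall_pos_le_add fun c hc => ?_
    have hεpos : 0 < c / ((∫ t in (0:ℝ)..1, w t) + 1) := by positivity
    have := key _ hεpos
    have hle : (c / ((∫ t in (0:ℝ)..1, w t) + 1)) * (∫ t in (0:ℝ)..1, w t) ≤ c := by
      rw [div_mul_eq_mul_div, div_le_iff₀ (by linarith)]
      nlinarith
    linarith
  -- combine
  have hsplit : (∫ t in (0:ℝ)..1, (‖γ' t‖ + |(⟪γ t, γ' t⟫_ℂ).re| / Real.sqrt (‖γ t‖ ^ 2 - 1)))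
      = (∫ t in (0:ℝ)..1, ‖γ' t‖) + ∫ t in (0:ℝ)..1, Bf t := by
    rw [← intervalIntegral.integral_add hγ'.norm hBI]
  simp only [hψdef] at part2
  linarith
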